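/- Let N ∈ ℕ, C > 0, A ≥ 1, and let u : ℝ^d → ℝ^κ and χ : ℝ^κ → ℝ be N-times continuously differentiable functions such that ‖D^n χ(x)‖ ≤ C·A^n for all x ∈ ℝ^κ and all 0 ≤ n ≤ N, and ‖D^n u(η)‖ ≤ C·A^{-n} for all η ∈ ℝ^d and all 1 ≤ n ≤ N. Then there exists a constant C' > 0, depending only on N, C, d, κ (and not on A), such that ‖D^n (χ ∘ u)(η)‖ ≤ C' for all η ∈ ℝ^d and all 0 ≤ n ≤ N. -/

import Mathlib

/-- **The cutoff lemma.**
If `‖D^n χ‖ ≤ C·A^n` for `0 ≤ n ≤ N` and `‖D^n u‖ ≤ C·A^{-n}` for `1 ≤ n ≤ N`,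
then all derivatives of order `≤ N` of the composition `χ ∘ u` are bounded by a
constant `C'` depending only on `N, C, d, κ` (and not on `A`). -/
theorem stmt_5 (d κ N : ℕ) (C : ℝ) (hC : 0 < C) :
    ∃ C' > 0, ∀ A : ℝ, 1 ≤ A →
      ∀ u : EuclideanSpace ℝ (Fin d) → EuclideanSpace ℝ (Fin κ),
      ∀ χ : EuclideanSpace ℝ (Fin κ) → ℝ,
      ContDiff ℝ N u → ContDiff ℝ N χ →
      (∀ x : EuclideanSpace ℝ (Fin κ), ∀ n : ℕ, n ≤ N →
        ‖iteratedFDeriv ℝ n χ x‖ ≤ C * A ^ n) →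
      (∀ η : EuclideanSpace ℝ (Fin d), ∀ n : ℕ, 1 ≤ n → n ≤ N →
        ‖iteratedFDeriv ℝ n u η‖ ≤ C * A ^ (-(n : ℤ))) →
      ∀ η : EuclideanSpace ℝ (Fin d), ∀ n : ℕ, n ≤ N →
        ‖iteratedFDeriv ℝ n (χ ∘ u) η‖ ≤ C' := by
  set M : ℝ := max C 1 with hMdef
  have hM1 : (1 : ℝ) ≤ M := le_max_right _ _
  have hCM : C ≤ M := le_max_left _ _
  refine ⟨(Nat.factorial N : ℝ) * C * M ^ N, by positivity, ?_⟩
  intro A hA u χ hu hχ hχb hub η n hn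
  have hA0 : (0 : ℝ) < A := lt_of_lt_of_le one_pos hA
  have key : ‖iteratedFDeriv ℝ n (χ ∘ u) η‖ ≤ (Nat.factorial n : ℝ) * (C * A ^ n) * (M / A) ^ n := by
    apply norm_iteratedFDeriv_comp_le hχ hu (by exact_mod_cast hn) η
    · intro i hi
      refine (hχb _ i (hi.trans hn)).trans ?_
      gcongr
    · intro i hi1 hi2
      calc ‖iteratedFDeriv ℝ i u η‖ ≤ C * A ^ (-(i : ℤ)) := hub η i hi1 (hi2.trans hn)
        _ ≤ M ^ i * A ^ (-(i : ℤ)) := by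
            have : C ≤ M ^ i := hCM.trans (le_self_pow₀ (by linarith) (by omega))
            gcongr
        _ = (M / A) ^ i := by
            rw [div_pow, zpow_neg, zpow_natCast]
            field_simp
  have heq : (Nat.factorial n : ℝ) * (C * A ^ n) * (M / A) ^ n = (Nat.factorial n : ℝ) * C * M ^ n := by
    rw [div_pow]
    field_simp
  rw [heq] at key
  refine key.trans ?_
  have hfac : (Nat.factorial n : ℝ) ≤ Nat.factorial N := by
    exact_mod_cast Nat.factorial_le hn
  gcongr
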